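/- Let M be a deterministic program and let q > 0 be any positive real. Then BE[⟨μ,h,ℓ⟩](M) ≤ q holds for every belief μ on ℍ, every h ∈ ℍ, and every ℓ ∈ 𝕃 if and only if M is non-interferent. -/

import Mathlib

/-!
Statement 9: For a deterministic program `M : ℍ × 𝕃 → 𝕆` and any real `q > 0`:
`BE[⟨μ,h,ℓ⟩](M) ≤ q` for every belief `μ` on `ℍ`, every `h ∈ ℍ` and every
`ℓ ∈ 𝕃` iff `M` is non-interferent.
-/

variable {Hi Li Oi : Type*}

/-- Relative entropy (distance) `D(μ → μ') = Σ_h μ'(h) · log₂(μ'(h)/μ(h))`. -/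
noncomputable def relD {X : Type*} [Fintype X] (μ μ' : X → ℝ) : ℝ :=
  ∑ x, μ' x * Real.logb 2 (μ' x / μ x)

/-- The point-mass distribution `ḣ` at `h`. -/
noncomputable def pointMass {X : Type*} [DecidableEq X] (h : X) : X → ℝ :=
  fun h' => if h = h' then 1 else 0

/-- The updated belief `μ|o_E`. -/
noncomputable def postBelief [Fintype Hi] [DecidableEq Oi]
    (M : Hi × Li → Oi) (μ : Hi → ℝ) (ℓE : Li) (oE : Oi) : Hi → ℝ :=
  fun h => if M (h, ℓE) = oE then μ h / (∑ h', if M (h', ℓE) = oE then μ h' else 0) else 0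

/-- Belief-based QIF `BE[⟨μ,h_E,ℓ_E⟩](M) = D(μ → ḣ_E) − D(μ|o_E → ḣ_E)`. -/
noncomputable def BE [Fintype Hi] [DecidableEq Hi] [DecidableEq Oi]
    (M : Hi × Li → Oi) (μ : Hi → ℝ) (hE : Hi) (ℓE : Li) : ℝ :=
  relD μ (pointMass hE) - relD (postBelief M μ ℓE (M (hE, ℓE))) (pointMass hE)

lemma sum_pointMass_mul {X : Type*} [Fintype X] [DecidableEq X] (h : X) (f : X → ℝ) :
    ∑ x, pointMass h x * f x = f h := by
  simp [pointMass, ite_mul]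

lemma relD_pointMass {X : Type*} [Fintype X] [DecidableEq X] (μ : X → ℝ) (h : X) :
    relD μ (pointMass h) = - Real.logb 2 (μ h) := by
  unfold relD
  rw [sum_pointMass_mul h (fun x => Real.logb 2 (pointMass h x / μ x))]
  simp [pointMass, one_div, Real.logb_inv]

lemma BE_eq [Fintype Hi] [DecidableEq Hi] [DecidableEq Oi]
    (M : Hi × Li → Oi) (μ : Hi → ℝ) (hpos : ∀ x, 0 < μ x) (h : Hi) (ℓ : Li) :
    BE M μ h ℓ = - Real.logb 2 (∑ x, if M (x, ℓ) = M (h, ℓ) then μ x else 0) := by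
  set s : ℝ := ∑ x, if M (x, ℓ) = M (h, ℓ) then μ x else 0 with hsdef
  have hs : 0 < s := by
    have h1 : μ h ≤ s := by
      apply Finset.single_le_sum (f := fun x => if M (x, ℓ) = M (h, ℓ) then μ x else 0)
        (fun i _ => by split; exacts [(hpos i).le, le_rfl])
        (Finset.mem_univ h) |>.trans_eq' (by simp)
    linarith [hpos h]
  unfold BE
  rw [relD_pointMass, relD_pointMass]
  have hpost : postBelief M μ ℓ (M (h, ℓ)) h = μ h / s := by
    simp [postBelief, hsdef]
  rw [hpost, Real.logb_div (hpos h).ne' hs.ne']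
  ring

/-- `BE[⟨μ,h,ℓ⟩](M) ≤ q` holds for every belief `μ`, every `h` and every `ℓ`
iff `M` is non-interferent. -/
theorem BE_le_q_forall_iff_noninterferent
    [Fintype Hi] [Fintype Li] [Fintype Oi] [DecidableEq Hi] [DecidableEq Oi]
    [Nonempty Hi] [Nonempty Li]
    (M : Hi × Li → Oi) (q : ℝ) (hq : 0 < q) :
    (∀ μ : Hi → ℝ, (∀ h', 0 < μ h') → (∑ h', μ h' = 1) →
        ∀ (h : Hi) (ℓ : Li), BE M μ h ℓ ≤ q) ↔
      (∀ (h h' : Hi) (ℓ : Li), M (h, ℓ) = M (h', ℓ)) := by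
  constructor
  · intro H
    by_contra hni
    push_neg at hni
    obtain ⟨h0, h1, ℓ, hne⟩ := hni
    have hne' : h0 ≠ h1 := fun e => hne (by rw [e])
    set n : ℕ := Fintype.card Hi with hn
    have hn2 : 2 ≤ n := Fintype.one_lt_card_iff.mpr ⟨h0, h1, hne'⟩
    set c : ℝ := (n : ℝ) - 1 with hc
    have hc1 : 1 ≤ c := by
      have h2 : (2 : ℝ) ≤ (n : ℝ) := by exact_mod_cast hn2
      rw [hc]; linarith
    clear_value c
    have hrq : (0:ℝ) < (2 : ℝ) ^ (-q) := Real.rpow_pos_of_pos (by norm_num) _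
    obtain ⟨ε, hεpos, hce1, hce2⟩ :
        ∃ ε : ℝ, 0 < ε ∧ c * ε ≤ 1 / 2 ∧ c * ε ≤ (2 : ℝ) ^ (-q) / 2 := by
      refine ⟨min (1 / (2 * c)) ((2 : ℝ) ^ (-q) / (2 * c)), lt_min (by positivity) (by positivity), ?_, ?_⟩
      · calc c * min (1 / (2 * c)) ((2 : ℝ) ^ (-q) / (2 * c)) ≤ c * (1 / (2 * c)) :=
              mul_le_mul_of_nonneg_left (min_le_left _ _) (by linarith)
          _ = 1 / 2 := by field_simp
      · calc c * min (1 / (2 * c)) ((2 : ℝ) ^ (-q) / (2 * c)) ≤ c * ((2 : ℝ) ^ (-q) / (2 * c)) :=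
              mul_le_mul_of_nonneg_left (min_le_right _ _) (by linarith)
          _ = (2 : ℝ) ^ (-q) / 2 := by field_simp
    set μ : Hi → ℝ := fun x => if x = h1 then 1 - c * ε else ε with hμ
    have hμh1 : μ h1 = 1 - c * ε := by simp [hμ]
    have hμne : ∀ x, x ≠ h1 → μ x = ε := by intro x hx; simp [hμ, hx]
    clear_value μ
    have hμpos : ∀ x, 0 < μ x := by
      intro x
      by_cases hx : x = h1
      · rw [hx, hμh1]; nlinarith
      · rw [hμne x hx]; exact hεpos
    have hμsum : ∑ x, μ x = 1 := by
      have heach : ∀ x, μ x = ε + (if x = h1 then 1 - c * ε - ε else 0) := by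
        intro x
        by_cases hx : x = h1
        · rw [hx, hμh1, if_pos rfl]; ring
        · rw [hμne x hx, if_neg hx]; ring
      simp only [heach, Finset.sum_add_distrib, Finset.sum_const, Finset.card_univ,
        Finset.sum_ite_eq' Finset.univ h1, Finset.mem_univ, if_true, nsmul_eq_mul, ← hn]
      have : (n : ℝ) = c + 1 := by rw [hc]; ring
      rw [this]; ring
    have hBE := H μ hμpos hμsum h0 ℓ
    rw [BE_eq M μ hμpos h0 ℓ] at hBE
    set s : ℝ := ∑ x, if M (x, ℓ) = M (h0, ℓ) then μ x else 0 with hsdef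
    have hspos : 0 < s := by
      have h1' : μ h0 ≤ s := by
        apply Finset.single_le_sum (f := fun x => if M (x, ℓ) = M (h0, ℓ) then μ x else 0)
          (fun i _ => by split; exacts [(hμpos i).le, le_rfl])
          (Finset.mem_univ h0) |>.trans_eq' (by simp)
      linarith [hμpos h0]
    have hsle : s ≤ c * ε := by
      have hb : ∀ x ∈ Finset.univ, (if M (x, ℓ) = M (h0, ℓ) then μ x else 0) ≤
          (if x = h1 then 0 else ε) := by
        intro x _
        by_cases hx : x = h1
        · rw [if_pos hx, if_neg (by rw [hx]; exact fun e => hne e.symm)]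
        · rw [if_neg hx]
          split
          · rw [hμne x hx]
          · exact hεpos.le
      have hle := Finset.sum_le_sum hb
      rw [← hsdef] at hle
      have hsum2 : (∑ x : Hi, if x = h1 then (0:ℝ) else ε) = (n : ℝ) * ε - ε := by
        have heach : ∀ x : Hi, (if x = h1 then (0:ℝ) else ε) = ε - (if x = h1 then ε else 0) := by
          intro x; split <;> ring
        simp only [heach, Finset.sum_sub_distrib, Finset.sum_const, Finset.card_univ,
          Finset.sum_ite_eq' Finset.univ h1, Finset.mem_univ, if_true, nsmul_eq_mul, ← hn]
      have hnc : (n : ℝ) * ε - ε = c * ε := by rw [hc]; ring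
      rw [hsum2, hnc] at hle
      exact hle
    have hslt : s < (2 : ℝ) ^ (-q) := lt_of_le_of_lt (hsle.trans hce2) (by linarith)
    have hlog : Real.logb 2 s < -q := by
      calc Real.logb 2 s < Real.logb 2 ((2 : ℝ) ^ (-q)) :=
            Real.logb_lt_logb (by norm_num) hspos hslt
        _ = -q := Real.logb_rpow (by norm_num) (by norm_num)
    linarith
  · intro hni μ hpos hsum h ℓ
    rw [BE_eq M μ hpos h ℓ]
    have : (∑ x, if M (x, ℓ) = M (h, ℓ) then μ x else 0) = 1 := by
      rw [← hsum]
      exact Finset.sum_congr rfl (fun x _ => if_pos (hni x h ℓ))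
    rw [this]
    simp
    linarith
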